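/- The map Υ: Λ₁ᵐG* → Aff(Σ, ΛᵐH*), Υ(η)(σ) = σ*η, is a linear isomorphism; in particular Λ₁ᵐG* ≅ Aff(Σ, ΛᵐH*) canonically. -/

import Mathlib

open Module Function

section Aux
variable {K G H' : Type*} [Field K] [AddCommGroup G] [Module K G]
  [AddCommGroup H'] [Module K H'] {m : ℕ}

lemma expand_aux {F : Submodule K G} {η : G [⋀^Fin m]→ₗ[K] K}
    (hη : ∀ (x : Fin m → G) (i j : Fin m), i ≠ j → x i ∈ F → x j ∈ F → η x = 0)
    (x f : Fin m → G) (hf : ∀ i, f i ∈ F) :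
    η (fun i => f i + x i) = η x + ∑ i, η (Function.update x i (f i)) := by
  classical
  have h1 : η (fun i => f i + x i) = ∑ s : Finset (Fin m), η (s.piecewise f x) := by
    have := η.toMultilinearMap.map_add_univ f x
    exact this
  rw [h1]
  set S : Finset (Finset (Fin m)) :=
    insert (∅ : Finset (Fin m)) (Finset.univ.image fun i => ({i} : Finset (Fin m))) with hS
  have hzero : ∀ s ∈ (Finset.univ : Finset (Finset (Fin m))), s ∉ S → η (s.piecewise f x) = 0 := by
    intro s _ hs
    rw [hS] at hs
    simp only [Finset.mem_insert, Finset.mem_image, Finset.mem_univ, true_and] at hs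
    push_neg at hs
    obtain ⟨hne, hsing⟩ := hs
    have hcard : 1 < s.card := by
      by_contra hc
      push_neg at hc
      have hall := Finset.card_le_one.mp hc
      obtain ⟨a, ha⟩ := hne
      exact hsing a (Finset.eq_singleton_iff_unique_mem.mpr ⟨ha, fun b hb => hall b hb a ha⟩).symm
    obtain ⟨i, hi, j, hj, hij⟩ := Finset.one_lt_card.mp hcard
    refine hη _ i j hij ?_ ?_
    · rw [Finset.piecewise_eq_of_mem _ _ _ hi]; exact hf i
    · rw [Finset.piecewise_eq_of_mem _ _ _ hj]; exact hf j
  rw [← Finset.sum_subset (Finset.subset_univ S) hzero]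
  rw [hS, Finset.sum_insert (by simp), Finset.sum_image (fun a _ b _ h => Finset.singleton_injective h)]
  simp [Finset.piecewise_empty, Finset.piecewise_singleton]

variable (ω : H' [⋀^Fin m]→ₗ[K] K) (p q : G →ₗ[K] H')

def corr : G [⋀^Fin m]→ₗ[K] K where
  toMultilinearMap := ∑ i : Fin m,
    ω.toMultilinearMap.compLinearMap (fun j => if j = i then q else p)
  map_eq_zero_of_eq' := by
    classical
    intro v i j hvij hij
    show (∑ i : Fin m, ω.toMultilinearMap.compLinearMap (fun j => if j = i then q else p)) v = 0
    rw [MultilinearMap.sum_apply]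
    simp only [MultilinearMap.compLinearMap_apply, AlternatingMap.coe_multilinearMap]
    have hcancel := ω.map_swap (fun s => if s = i then q (v s) else p (v s)) hij
    rw [Finset.sum_eq_add i j hij ?_ (by simp) (by simp)]
    · have heq : (fun s => (if s = j then q else p) (v s))
          = (fun s => if s = i then q (v s) else p (v s)) ∘ ⇑(Equiv.swap i j) := by
        funext s
        by_cases hsi : s = i
        · subst hsi; simp [hij, Ne.symm hij, hvij]
        · by_cases hsj : s = j
          · subst hsj; simp [hij, Ne.symm hij, hvij]
          · simp [hsi, hsj, Equiv.swap_apply_of_ne_of_ne hsi hsj]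
      have h1 : (fun s => (if s = i then q else p) (v s))
          = (fun s => if s = i then q (v s) else p (v s)) := by
        funext s; by_cases hs : s = i <;> simp [hs]
      rw [h1, heq, hcancel]
      ring
    · intro k _ hk
      refine ω.map_eq_zero_of_eq _ (i := i) (j := j) ?_ hij
      simp [Ne.symm hk.1, Ne.symm hk.2, hvij]

lemma corr_apply (g : Fin m → G) :
    corr ω p q g = ∑ i, ω (Function.update (fun j => p (g j)) i (q (g i))) := by
  classical
  have h0 : corr ω p q g
      = (∑ i : Fin m, ω.toMultilinearMap.compLinearMap (fun j => if j = i then q else p)) g := rfl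
  rw [h0, MultilinearMap.sum_apply]
  refine Finset.sum_congr rfl fun i _ => ?_
  simp only [MultilinearMap.compLinearMap_apply, AlternatingMap.coe_multilinearMap]
  congr 1
  funext j
  rw [Function.update_apply]
  by_cases hj : j = i <;> simp [hj]

lemma corr_eq (e : Basis (Fin m) K H') (A : H' →ₗ[K] H') :
    corr ω LinearMap.id A = (∑ s, e.coord s (A (e s))) • ω := by
  classical
  have key : ∀ ψ χ : H' [⋀^Fin m]→ₗ[K] K, ψ ⇑e = χ ⇑e → ψ = χ := by
    intro ψ χ hh
    rw [AlternatingMap.eq_smul_basis_det e ψ, AlternatingMap.eq_smul_basis_det e χ, hh]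
  apply key
  rw [corr_apply, AlternatingMap.smul_apply]
  simp only [LinearMap.id_coe, id_eq]
  have hterm : ∀ i : Fin m,
      ω (Function.update (fun j => e j) i (A (e i))) = e.coord i (A (e i)) • ω ⇑e := by
    intro i
    conv_lhs => rw [← Basis.sum_repr e (A (e i))]
    rw [ω.map_update_sum]
    rw [Finset.sum_eq_single i ?_ (by simp)]
    · show ω (Function.update (fun j => e j) i ((e.repr (A (e i))) i • e i)) = _
      rw [ω.map_update_smul, Basis.coord_apply]
      congr 2
      show Function.update (⇑e) i (e i) = ⇑e
      exact Function.update_eq_self i ⇑e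
    · intro s _ hs
      rw [ω.map_update_smul]
      have h0 : ω (Function.update (fun j => e j) i (e s)) = 0 := by
        refine ω.map_eq_zero_of_eq _ (i := i) (j := s) ?_ (Ne.symm hs)
        simp [Function.update_apply, hs, Ne.symm hs]
      rw [h0, smul_zero]
  calc ∑ i, ω (Function.update (fun j => e j) i (A (e i)))
      = ∑ i, e.coord i (A (e i)) • ω ⇑e := Finset.sum_congr rfl fun i _ => hterm i
    _ = (∑ s, e.coord s (A (e s))) • ω ⇑e := by rw [Finset.sum_smul]

end Aux

/-- `Λ₁ᵐG*`: alternating `m`-forms on `G` vanishing whenever two distinct arguments lie in `F`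
(equivalently `i(u)i(v)α = 0` for all `u,v ∈ F`). -/
def Lambda1 (K G : Type*) [Field K] [AddCommGroup G] [Module K G]
    (F : Submodule K G) (m : ℕ) : Submodule K (G [⋀^Fin m]→ₗ[K] K) where
  carrier := {α | ∀ (x : Fin m → G) (i j : Fin m), i ≠ j → x i ∈ F → x j ∈ F → α x = 0}
  add_mem' := by
    intro a b ha hb x i j hij hi hj
    simp [ha x i j hij hi hj, hb x i j hij hi hj]
  zero_mem' := by intro x i j _ _ _; simp
  smul_mem' := by
    intro c a ha x i j hij hi hj
    simp [ha x i j hij hi hj]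

/-- The map `Υ : Λ₁ᵐG* → Aff(Σ, ΛᵐH*)`, `Υ(η)(σ) = σ*η`, is a linear
isomorphism onto the space of affine maps `Σ → ΛᵐH*` (where `Σ` is the affine space of linear
sections of `π`, modeled on `Hom(H,F)` via `(σ,λ) ↦ σ + τ∘λ`): `Υ` is linear, injective, and
its range is exactly the set of affine maps. -/
theorem stmt_9 (K G H : Type*) [Field K] [AddCommGroup G] [Module K G]
    [AddCommGroup H] [Module K H] [FiniteDimensional K G] [FiniteDimensional K H]
    (F : Submodule K G) (π : G →ₗ[K] H) (hπ : Function.Surjective π)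
    (hker : LinearMap.ker π = F) (m : ℕ) (hm : Module.finrank K H = m) (hm1 : 1 ≤ m) :
    ∃ U : (Lambda1 K G F m) →ₗ[K]
        ({σ : H →ₗ[K] G // π ∘ₗ σ = LinearMap.id} → (H [⋀^Fin m]→ₗ[K] K)),
      (∀ (η : Lambda1 K G F m) (σ : {σ : H →ₗ[K] G // π ∘ₗ σ = LinearMap.id}),
        U η σ = AlternatingMap.compLinearMap (η : G [⋀^Fin m]→ₗ[K] K) σ.val) ∧
      Function.Injective U ∧
      Set.range U = {φ | ∃ L : (H →ₗ[K] F) →ₗ[K] (H [⋀^Fin m]→ₗ[K] K),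
        ∀ (σ σ' : {σ : H →ₗ[K] G // π ∘ₗ σ = LinearMap.id}) (l : H →ₗ[K] F),
          σ'.val = σ.val + F.subtype ∘ₗ l → φ σ' = φ σ + L l} := by
  classical
  have hτ : ∀ x : F, π (F.subtype x) = 0 := by
    intro x
    have hx : (x : G) ∈ LinearMap.ker π := by rw [hker]; exact x.2
    simpa using hx
  have hmemF : ∀ g : G, π g = 0 → g ∈ F := by
    intro g hg; rw [← hker]; exact hg
  obtain ⟨σ₀', hσ₀'⟩ := LinearMap.exists_rightInverse_of_surjective π
    (LinearMap.range_eq_top.mpr hπ)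
  let σ₀ : {σ : H →ₗ[K] G // π ∘ₗ σ = LinearMap.id} := ⟨σ₀', hσ₀'⟩
  have hsec : ∀ (σ : {σ : H →ₗ[K] G // π ∘ₗ σ = LinearMap.id}) (y : H), π (σ.val y) = y := by
    intro σ y
    have := LinearMap.ext_iff.mp σ.2 y
    simpa using this
  have hdiff : ∀ (σ σ' : {σ : H →ₗ[K] G // π ∘ₗ σ = LinearMap.id}) (y : H),
      σ'.val y - σ.val y ∈ F := by
    intro σ σ' y
    exact hmemF _ (by rw [map_sub, hsec, hsec, sub_self])
  let U : (Lambda1 K G F m) →ₗ[K]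
      ({σ : H →ₗ[K] G // π ∘ₗ σ = LinearMap.id} → (H [⋀^Fin m]→ₗ[K] K)) :=
    { toFun := fun η σ => (η : G [⋀^Fin m]→ₗ[K] K).compLinearMap σ.val,
      map_add' := fun a b => by
        funext σ
        exact AlternatingMap.add_compLinearMap _ _ _,
      map_smul' := fun c a => by
        funext σ
        ext v
        simp }
  have hUdef : ∀ (η : Lambda1 K G F m) (σ : {σ : H →ₗ[K] G // π ∘ₗ σ = LinearMap.id}),
      U η σ = AlternatingMap.compLinearMap (η : G [⋀^Fin m]→ₗ[K] K) σ.val := fun _ _ => rfl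
  refine ⟨U, hUdef, ?_, ?_⟩
  · -- injectivity
    have hker0 : ∀ η : Lambda1 K G F m, U η = 0 → η = 0 := by
      intro η hU
      have hη : ∀ (x : Fin m → G) (i j : Fin m), i ≠ j → x i ∈ F → x j ∈ F →
          (η : G [⋀^Fin m]→ₗ[K] K) x = 0 := η.2
      have hUσ : ∀ (σ : {σ : H →ₗ[K] G // π ∘ₗ σ = LinearMap.id}) (hv : Fin m → H),
          (η : G [⋀^Fin m]→ₗ[K] K) (fun i => σ.val (hv i)) = 0 := by
        intro σ hv
        have h1 : (η : G [⋀^Fin m]→ₗ[K] K).compLinearMap σ.val = 0 := congrFun hU σ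
        have h2 := AlternatingMap.ext_iff.mp h1 hv
        simpa [AlternatingMap.compLinearMap_apply] using h2
      have step2 : ∀ (hv : Fin m → H) (i : Fin m) (fv : G), fv ∈ F →
          (η : G [⋀^Fin m]→ₗ[K] K) (Function.update (fun j => σ₀.val (hv j)) i fv) = 0 := by
        intro hv i fv hfv
        by_cases hind : LinearIndependent K (fun j : {j : Fin m // j ≠ i} => hv j)
        · -- independent case : build a suitable section
          have hcard : Fintype.card {j : Fin m // j ≠ i} = m - 1 := by
            simp [Fintype.card_subtype_compl]
          have hspan : Submodule.span K
              (Set.range fun j : {j : Fin m // j ≠ i} => hv ↑j) ≠ ⊤ := by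
            intro htop
            have h1 := finrank_span_eq_card hind
            rw [htop, finrank_top, hm, hcard] at h1
            omega
          obtain ⟨w, hw⟩ : ∃ w, w ∉ Submodule.span K
              (Set.range fun j : {j : Fin m // j ≠ i} => hv ↑j) := by
            by_contra hc
            push_neg at hc
            exact hspan (Submodule.eq_top_iff'.mpr hc)
          have hins : LinearIndepOn K id
              (insert w (Set.range fun j : {j : Fin m // j ≠ i} => hv ↑j)) :=
            hind.linearIndepOn_id.id_insert hw
          have hsubext : insert w (Set.range fun j : {j : Fin m // j ≠ i} => hv ↑j)
              ⊆ hins.extend (Set.subset_univ _) := hins.subset_extend _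
          set bex := Basis.extend hins with hbex
          let l : H →ₗ[K] F := bex.constr K
            (fun x => if (x : H) = w then (⟨fv, hfv⟩ : F) else 0)
          have hlw : l w = ⟨fv, hfv⟩ := by
            have hwmem : w ∈ hins.extend (Set.subset_univ _) := hsubext (Set.mem_insert _ _)
            have hc := Basis.constr_basis bex K
              (fun x => if (x : H) = w then (⟨fv, hfv⟩ : F) else 0) ⟨w, hwmem⟩
            rw [hbex, Basis.extend_apply_self] at hc
            rw [show l w = (bex.constr K
              (fun x => if (x : H) = w then (⟨fv, hfv⟩ : F) else 0)) w from rfl]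
            rw [hc]
            simp
          have hlj : ∀ j : Fin m, j ≠ i → l (hv j) = 0 := by
            intro j hj
            have hmem : hv j ∈ hins.extend (Set.subset_univ _) :=
              hsubext (Set.mem_insert_of_mem _ ⟨⟨j, hj⟩, rfl⟩)
            have hc := Basis.constr_basis bex K
              (fun x => if (x : H) = w then (⟨fv, hfv⟩ : F) else 0) ⟨hv j, hmem⟩
            rw [hbex, Basis.extend_apply_self] at hc
            have hne : hv j ≠ w := by
              intro hEq
              exact hw (hEq ▸ Submodule.subset_span ⟨⟨j, hj⟩, rfl⟩)
            rw [show l (hv j) = (bex.constr K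
              (fun x => if (x : H) = w then (⟨fv, hfv⟩ : F) else 0)) (hv j) from rfl]
            rw [hc]
            simp [hne]
          have hσ' : π ∘ₗ (σ₀.val + F.subtype ∘ₗ l) = LinearMap.id := by
            ext y
            have h1 : π ((σ₀.val + F.subtype ∘ₗ l) y) = y := by
              rw [LinearMap.add_apply, map_add, hsec σ₀, LinearMap.comp_apply, hτ (l y), add_zero]
            simpa using h1
          have h0 := hUσ ⟨σ₀.val + F.subtype ∘ₗ l, hσ'⟩ (Function.update hv i w)
          have hdecomp : (fun j => (σ₀.val + F.subtype ∘ₗ l) (Function.update hv i w j))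
              = fun j => (F.subtype (l (Function.update hv i w j)))
                  + (σ₀.val (Function.update hv i w j)) := by
            funext j
            simp [add_comm]
          rw [hdecomp] at h0
          rw [expand_aux hη (fun j => σ₀.val (Function.update hv i w j))
            (fun j => F.subtype (l (Function.update hv i w j)))
            (fun j => (l (Function.update hv i w j)).2)] at h0
          rw [hUσ σ₀ (Function.update hv i w)] at h0
          rw [Finset.sum_eq_single i ?_ (by simp)] at h0
          · have hfin : Function.update (fun j => σ₀.val (Function.update hv i w j)) i
                (F.subtype (l (Function.update hv i w i)))
                = Function.update (fun j => σ₀.val (hv j)) i fv := by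
              funext j
              by_cases hj : j = i
              · subst hj
                rw [Function.update_self, Function.update_self, Function.update_self, hlw]
                rfl
              · rw [Function.update_of_ne hj, Function.update_of_ne hj]
                rw [Function.update_of_ne hj]
            rw [hfin, zero_add] at h0
            exact h0
          · intro k _ hk
            refine AlternatingMap.map_coord_zero _ k ?_
            rw [Function.update_self, Function.update_of_ne hk, hlj k hk]
            simp
        · -- dependent case
          have hdep : ¬ LinearIndependent K
              (Function.update (fun j => σ₀.val (hv j)) i fv) := by
            intro hLI
            apply hind
            have h2 := hLI.comp (Subtype.val : {j : Fin m // j ≠ i} → Fin m)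
              Subtype.val_injective
            have h3 : (Function.update (fun j => σ₀.val (hv j)) i fv
                ∘ (Subtype.val : {j : Fin m // j ≠ i} → Fin m))
                = (⇑σ₀.val ∘ fun j : {j : Fin m // j ≠ i} => hv ↑j) := by
              funext j
              simp [Function.comp, Function.update_of_ne j.2]
            rw [h3] at h2
            exact LinearIndependent.of_comp σ₀.val h2
          exact AlternatingMap.map_linearDependent _ _ hdep
      have hval : (η : G [⋀^Fin m]→ₗ[K] K) = 0 := by
        ext g
        have hx : (fun j => (g j - σ₀.val (π (g j))) + σ₀.val (π (g j))) = g := by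
          funext j; abel
        have h1 : (η : G [⋀^Fin m]→ₗ[K] K) g
            = (η : G [⋀^Fin m]→ₗ[K] K)
              (fun j => (g j - σ₀.val (π (g j))) + σ₀.val (π (g j))) := by rw [hx]
        rw [h1, expand_aux hη (fun j => σ₀.val (π (g j))) (fun j => g j - σ₀.val (π (g j)))
          (fun j => hmemF _ (by rw [map_sub, hsec σ₀, sub_self]))]
        rw [hUσ σ₀ (fun j => π (g j))]
        rw [Finset.sum_eq_zero (fun i _ => step2 (fun j => π (g j)) i _
          (hmemF _ (by rw [map_sub, hsec σ₀, sub_self])))]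
        simp
      exact Subtype.ext hval
    intro a b hab
    have h0 : U (a - b) = 0 := by rw [map_sub U a b, hab, sub_self]
    have := hker0 (a - b) h0
    exact sub_eq_zero.mp this
  · -- range characterization
    ext φ
    simp only [Set.mem_range, Set.mem_setOf_eq]
    constructor
    · rintro ⟨η, rfl⟩
      have hη : ∀ (x : Fin m → G) (i j : Fin m), i ≠ j → x i ∈ F → x j ∈ F →
          (η : G [⋀^Fin m]→ₗ[K] K) x = 0 := η.2
      -- expansion lemma
      have hexp : ∀ (σ : {σ : H →ₗ[K] G // π ∘ₗ σ = LinearMap.id}) (l : H →ₗ[K] F)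
          (hv : Fin m → H),
          (η : G [⋀^Fin m]→ₗ[K] K) (fun j => (σ.val + F.subtype ∘ₗ l) (hv j))
            = (η : G [⋀^Fin m]→ₗ[K] K) (fun j => σ.val (hv j))
              + ∑ i, (η : G [⋀^Fin m]→ₗ[K] K)
                  (Function.update (fun j => σ.val (hv j)) i (F.subtype (l (hv i)))) := by
        intro σ l hv
        have h2 : (fun j => (σ.val + F.subtype ∘ₗ l) (hv j))
            = fun j => F.subtype (l (hv j)) + σ.val (hv j) := by
          funext j
          rw [LinearMap.add_apply, LinearMap.comp_apply, add_comm]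
        rw [h2, expand_aux hη (fun j => σ.val (hv j)) (fun j => F.subtype (l (hv j)))
          (fun j => (l (hv j)).2)]
      -- independence of base section
      have hswap : ∀ (σ : {σ : H →ₗ[K] G // π ∘ₗ σ = LinearMap.id}) (hv : Fin m → H)
          (i : Fin m) (fv : G), fv ∈ F →
          (η : G [⋀^Fin m]→ₗ[K] K) (Function.update (fun j => σ.val (hv j)) i fv)
          = (η : G [⋀^Fin m]→ₗ[K] K) (Function.update (fun j => σ₀.val (hv j)) i fv) := by
        intro σ hv i fv hfv
        set x := Function.update (fun j => σ₀.val (hv j)) i fv with hxdef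
        set d := Function.update (fun j => σ.val (hv j) - σ₀.val (hv j)) i 0 with hddef
        have hd : ∀ j, d j ∈ F := by
          intro j
          rw [hddef, Function.update_apply]
          split
          · exact F.zero_mem
          · exact hdiff σ₀ σ (hv j)
        have hsum : Function.update (fun j => σ.val (hv j)) i fv
            = fun j => d j + x j := by
          funext j
          by_cases hj : j = i
          · subst hj
            rw [Function.update_self, hddef, hxdef, Function.update_self,
              Function.update_self, zero_add]
          · rw [Function.update_of_ne hj, hddef, hxdef, Function.update_of_ne hj,
              Function.update_of_ne hj]
            abel
        rw [hsum, expand_aux hη x d hd]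
        have hzero : ∀ k ∈ Finset.univ, (η : G [⋀^Fin m]→ₗ[K] K) (Function.update x k (d k)) = 0 := by
          intro k _
          by_cases hk : k = i
          · subst hk
            refine AlternatingMap.map_coord_zero _ k ?_
            rw [Function.update_self, hddef, Function.update_self]
          · refine hη _ i k (Ne.symm hk) ?_ ?_
            · rw [Function.update_of_ne (Ne.symm hk), hxdef, Function.update_self]
              exact hfv
            · rw [Function.update_self, hddef, Function.update_of_ne hk]
              exact hdiff σ₀ σ (hv k)
        rw [Finset.sum_eq_zero hzero, add_zero]
      -- the linear part L
      have hLraw : ∀ (l : H →ₗ[K] F) (hv : Fin m → H),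
          ((η : G [⋀^Fin m]→ₗ[K] K).compLinearMap (σ₀.val + F.subtype ∘ₗ l)
            - (η : G [⋀^Fin m]→ₗ[K] K).compLinearMap σ₀.val) hv
          = ∑ i, (η : G [⋀^Fin m]→ₗ[K] K)
              (Function.update (fun j => σ₀.val (hv j)) i (F.subtype (l (hv i)))) := by
        intro l hv
        rw [AlternatingMap.sub_apply, AlternatingMap.compLinearMap_apply,
          AlternatingMap.compLinearMap_apply, hexp σ₀ l hv]
        ring
      let L : (H →ₗ[K] F) →ₗ[K] (H [⋀^Fin m]→ₗ[K] K) :=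
        { toFun := fun l => (η : G [⋀^Fin m]→ₗ[K] K).compLinearMap (σ₀.val + F.subtype ∘ₗ l)
            - (η : G [⋀^Fin m]→ₗ[K] K).compLinearMap σ₀.val,
          map_add' := by
            intro l l'
            ext hv
            rw [AlternatingMap.add_apply, hLraw, hLraw, hLraw, ← Finset.sum_add_distrib]
            refine Finset.sum_congr rfl fun i _ => ?_
            have : (F.subtype (((l + l') : H →ₗ[K] F) (hv i)))
                = F.subtype (l (hv i)) + F.subtype (l' (hv i)) := by simp
            rw [this, AlternatingMap.map_update_add]
          map_smul' := by
            intro c l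
            ext hv
            rw [RingHom.id_apply, AlternatingMap.smul_apply, hLraw, hLraw, Finset.smul_sum]
            refine Finset.sum_congr rfl fun i _ => ?_
            have : (F.subtype (((c • l) : H →ₗ[K] F) (hv i)))
                = c • F.subtype (l (hv i)) := by simp
            rw [this, AlternatingMap.map_update_smul] }
      refine ⟨L, fun σ σ' l hσσ' => ?_⟩
      ext hv
      rw [hUdef, hUdef, hσσ', AlternatingMap.add_apply, AlternatingMap.compLinearMap_apply,
        AlternatingMap.compLinearMap_apply, hexp σ l hv]
      congr 1
      have hLlhv : L l hv = ∑ i, (η : G [⋀^Fin m]→ₗ[K] K)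
          (Function.update (fun j => σ₀.val (hv j)) i (F.subtype (l (hv i)))) := hLraw l hv
      rw [hLlhv]
      exact Finset.sum_congr rfl fun i _ => hswap σ hv i _ (l (hv i)).2
    · rintro ⟨L, hL⟩
      set e : Basis (Fin m) K H := Module.finBasisOfFinrankEq K H hm with he
      set Λ : (H →ₗ[K] F) → K := fun l => L l ⇑e with hΛ
      have hΛadd : ∀ l l', Λ (l + l') = Λ l + Λ l' := by
        intro l l'
        rw [hΛ]
        simp only [map_add, AlternatingMap.add_apply]
      have hΛsmul : ∀ (c : K) l, Λ (c • l) = c • Λ l := by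
        intro c l
        rw [hΛ]
        simp only [map_smul, AlternatingMap.smul_apply]
      have hsRadd : ∀ (ξ : H →ₗ[K] K) (f f' : F),
          LinearMap.smulRight ξ (f + f') = LinearMap.smulRight ξ f + LinearMap.smulRight ξ f' := by
        intro ξ f f'
        ext y
        simp [smul_add]
      have hsRsmul : ∀ (ξ : H →ₗ[K] K) (c : K) (f : F),
          LinearMap.smulRight ξ (c • f) = c • LinearMap.smulRight ξ f := by
        intro ξ c f
        ext y
        rw [LinearMap.smulRight_apply, LinearMap.smul_apply, LinearMap.smulRight_apply,
          smul_comm]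
      let E : F →ₗ[K] H :=
        { toFun := fun f => ∑ s, Λ (LinearMap.smulRight (e.coord s) f) • e s,
          map_add' := by
            intro f f'
            show (∑ s, Λ (LinearMap.smulRight (e.coord s) (f + f')) • e s)
              = (∑ s, Λ (LinearMap.smulRight (e.coord s) f) • e s)
                + (∑ s, Λ (LinearMap.smulRight (e.coord s) f') • e s)
            rw [← Finset.sum_add_distrib]
            refine Finset.sum_congr rfl fun s _ => ?_
            rw [hsRadd, hΛadd, add_smul]
          map_smul' := by
            intro c f
            show (∑ s, Λ (LinearMap.smulRight (e.coord s) (c • f)) • e s)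
              = c • (∑ s, Λ (LinearMap.smulRight (e.coord s) f) • e s)
            rw [Finset.smul_sum]
            refine Finset.sum_congr rfl fun s _ => ?_
            rw [hsRsmul, hΛsmul, smul_eq_mul, mul_smul] }
      have hρmem : ∀ g : G, ((LinearMap.id : G →ₗ[K] G) - σ₀.val ∘ₗ π) g ∈ F := by
        intro g
        refine hmemF _ ?_
        simp [hsec σ₀]
      let ρ : G →ₗ[K] F := LinearMap.codRestrict F ((LinearMap.id : G →ₗ[K] G) - σ₀.val ∘ₗ π) hρmem
      set η' : G [⋀^Fin m]→ₗ[K] K := (φ σ₀).compLinearMap π + corr e.det π (E ∘ₗ ρ) with hη'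
      have hπ0 : ∀ g : G, g ∈ F → π g = 0 := by
        intro g hg
        have : g ∈ LinearMap.ker π := by rw [hker]; exact hg
        simpa using this
      have hη'mem : η' ∈ Lambda1 K G F m := by
        intro x i j hij hi hj
        have hxi : π (x i) = 0 := hπ0 _ hi
        have hxj : π (x j) = 0 := hπ0 _ hj
        have h1 : (φ σ₀).compLinearMap π x = 0 := by
          rw [AlternatingMap.compLinearMap_apply]
          exact AlternatingMap.map_coord_zero _ i (by simp [hxi])
        have h2 : corr e.det π (E ∘ₗ ρ) x = 0 := by
          rw [corr_apply]
          refine Finset.sum_eq_zero fun k _ => ?_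
          by_cases hk : k = i
          · subst hk
            refine AlternatingMap.map_coord_zero _ j ?_
            rw [Function.update_of_ne (Ne.symm hij)]
            exact hxj
          · refine AlternatingMap.map_coord_zero _ i ?_
            rw [Function.update_of_ne (fun h => hk h.symm)]
            exact hxi
        rw [hη', AlternatingMap.add_apply, h1, h2, add_zero]
      have hUφ : ∀ σ : {σ : H →ₗ[K] G // π ∘ₗ σ = LinearMap.id},
          η'.compLinearMap σ.val = φ σ := by
        intro σ
        set lσ : H →ₗ[K] F := LinearMap.codRestrict F (σ.val - σ₀.val)
          (fun y => by simpa using hdiff σ₀ σ y) with hlσ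
        have hστ : σ.val = σ₀.val + F.subtype ∘ₗ lσ := by
          ext y
          simp [hlσ]
        ext hv
        rw [AlternatingMap.compLinearMap_apply, hη', AlternatingMap.add_apply,
          AlternatingMap.compLinearMap_apply, corr_apply]
        have hπσ : (fun i => π (σ.val (hv i))) = hv := by
          funext i; exact hsec σ (hv i)
        have hρσ : ∀ y : H, ρ (σ.val y) = lσ y := by
          intro y
          apply Subtype.ext
          show σ.val y - σ₀.val (π (σ.val y)) = σ.val y - σ₀.val y
          rw [hsec σ]
        have hsum : (∑ i, e.det (Function.update hv i ((E ∘ₗ ρ) (σ.val (hv i)))))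
            = corr e.det LinearMap.id (E ∘ₗ lσ) hv := by
          rw [corr_apply]
          refine Finset.sum_congr rfl fun i _ => ?_
          congr 1
          funext j
          by_cases hj : j = i
          · subst hj
            rw [Function.update_self, Function.update_self]
            show E (ρ (σ.val (hv j))) = E (lσ (hv j))
            rw [hρσ]
          · rw [Function.update_of_ne hj, Function.update_of_ne hj]
            simp
        rw [hπσ, hsum, corr_eq e.det e (E ∘ₗ lσ), AlternatingMap.smul_apply]
        -- compute the coefficient
        have hcoef : (∑ s, e.coord s ((E ∘ₗ lσ) (e s))) = L lσ ⇑e := by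
          have h1 : ∀ s : Fin m, e.coord s ((E ∘ₗ lσ) (e s))
              = Λ (LinearMap.smulRight (e.coord s) (lσ (e s))) := by
            intro s
            show e.coord s (∑ t, Λ (LinearMap.smulRight (e.coord t) (lσ (e s))) • e t) = _
            rw [map_sum]
            rw [Finset.sum_eq_single s ?_ (by simp)]
            · rw [map_smul, Basis.coord_apply, Basis.repr_self]
              simp
            · intro t _ hts
              rw [map_smul, Basis.coord_apply, Basis.repr_self]
              simp [Finsupp.single_apply, hts]
          rw [Finset.sum_congr rfl (fun s _ => h1 s)]
          let evalE : (H [⋀^Fin m]→ₗ[K] K) →+ K :=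
            AddMonoidHom.mk' (fun ψ => ψ ⇑e) (fun a b => AlternatingMap.add_apply a b ⇑e)
          have h2 : ∑ s, Λ (LinearMap.smulRight (e.coord s) (lσ (e s)))
              = L (∑ s, LinearMap.smulRight (e.coord s) (lσ (e s))) ⇑e := by
            rw [map_sum L _ Finset.univ]
            rw [show (∑ s, L (LinearMap.smulRight (e.coord s) (lσ (e s)))) ⇑e
                = evalE (∑ s, L (LinearMap.smulRight (e.coord s) (lσ (e s)))) from rfl]
            rw [map_sum evalE]
            rfl
          have h3 : (∑ s, LinearMap.smulRight (e.coord s) (lσ (e s))) = lσ := by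
            ext y
            rw [LinearMap.sum_apply]
            simp only [LinearMap.smulRight_apply]
            calc (↑(∑ s, e.coord s y • lσ (e s)) : G)
                = ↑(∑ s, lσ (e.coord s y • e s)) := by
                  congr 1
                  exact Finset.sum_congr rfl fun s _ => by rw [map_smul]
              _ = ↑(lσ (∑ s, e.coord s y • e s)) := by rw [map_sum lσ]
              _ = ↑(lσ y) := by
                  congr 2
                  simp only [Basis.coord_apply]
                  exact Basis.sum_repr e y
          rw [h2, h3]
        rw [hcoef, hL σ₀ σ lσ hστ, AlternatingMap.add_apply]
        congr 1
        conv_rhs => rw [AlternatingMap.eq_smul_basis_det e (L lσ), AlternatingMap.smul_apply]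
      exact ⟨⟨η', hη'mem⟩, funext fun σ => hUφ σ⟩
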